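/- A finite map m from lists of strings to values of type a lies in the image of pathMap if and only if the set of keys of m is prefix-free; consequently pathMap restricts to a bijection between Dtry a and finite maps on prefix-free key sets, with inverse fromPathMap given by successive insertion. -/

import Mathlib

/- Nonempty finite maps from strings to `b` are modeled as a nonempty finite key set
`s : Finset String` together with a value function `(k : String) → k ∈ s → b`. -/

/-- `DtryNE a = Free Record≠∅ a`: the free monad on nonempty finite string maps. -/
inductive DtryNE (a : Type) : Type
  | pure : a → DtryNE a
  | join : (s : Finset String) → s.Nonempty → ((k : String) → k ∈ s → DtryNE a) → DtryNE a

namespace DtryNE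

variable {a b : Type}

/-- Functorial action. -/
def map (g : a → b) : DtryNE a → DtryNE b
  | .pure x => .pure (g x)
  | .join s hs f => .join s hs fun k h => (f k h).map g

/-- Monad multiplication of the free monad. -/
def mu : DtryNE (DtryNE a) → DtryNE a
  | .pure x => x
  | .join s hs f => .join s hs fun k h => (f k h).mu

attribute [local instance] Classical.propDecidable

/-- `distrib`: recursively filter out `none` leaves, returning `none` if everything
is filtered away.  At a node, `filterNothings` keeps exactly the keys whose subtree
survives, and fails if no key survives. -/
noncomputable def distrib : DtryNE (Option a) → Option (DtryNE a)
  | .pure mx => mx.map .pure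
  | .join s _ f =>
      let g : (k : String) → k ∈ s → Option (DtryNE a) := fun k h => distrib (f k h)
      let s' : Finset String := s.filter (fun k => ∃ h : k ∈ s, (g k h).isSome)
      if h' : s'.Nonempty then
        some (.join s' h' (fun k hk => (g k (by
            have := (Finset.mem_filter.mp hk).1; exact this)).get (by
            have := (Finset.mem_filter.mp hk).2; exact this.choose_spec)))
      else none

end DtryNE

/-- Look up the value stored at a given path in a nonempty directory; `pathMap` viewed
as a (finitely supported) map from complete paths to leaf values. -/
def DtryNE.look {a : Type} : DtryNE a → List String → Option a
  | .pure x, [] => some x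
  | .pure _, _ :: _ => none
  | .join _ _ _, [] => none
  | .join s _ f, k :: ks => if h : k ∈ s then (f k h).look ks else none

/-- The directory monad: `Dtry = Option ∘ Dtry≠∅`. -/
def Dtry (a : Type) : Type := Option (DtryNE a)

/-- `pathMap`: the map from complete paths to the values stored at them. -/
def Dtry.pathMap {a : Type} : Dtry a → List String → Option a
  | none, _ => none
  | some t, p => t.look p

/-- A (partial) map from paths to values has prefix-free keys if no key with a value is a
prefix of a distinct key with a value. -/
def PrefixFreeKeys {a : Type} (m : List String → Option a) : Prop :=
  ∀ p p', m p ≠ none → m p' ≠ none → p ≠ p' → ¬ p <+: p'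

variable {a : Type}

theorem DtryNE.exists_look_ne : ∀ t : DtryNE a, ∃ p, t.look p ≠ none
  | .pure x => ⟨[], by simp [DtryNE.look]⟩
  | .join s hs f => by
      obtain ⟨k, hk⟩ := hs
      obtain ⟨p, hp⟩ := (f k hk).exists_look_ne
      exact ⟨k :: p, by simp [DtryNE.look, hk]; exact hp⟩

theorem DtryNE.finite_look : ∀ t : DtryNE a, (setOf fun p => t.look p ≠ none).Finite
  | .pure x => Set.Finite.subset (Set.finite_singleton []) (by
      rintro (_ | ⟨k, ks⟩) h
      · simp
      · simp [DtryNE.look, setOf] at h)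
  | .join s hs f => by
      have hsub : (setOf fun p => (DtryNE.join s hs f).look p ≠ none) ⊆
          ⋃ k ∈ s, (fun p => k :: p) '' ⋃ (h : k ∈ s), (setOf fun p => (f k h).look p ≠ none) := by
        rintro (_ | ⟨k, ks⟩) h
        · simp [DtryNE.look, setOf] at h
        · simp only [DtryNE.look, setOf, Set.mem_setOf_eq] at h
          by_cases hk : k ∈ s
          · simp only [dif_pos hk] at h
            exact Set.mem_biUnion hk ⟨ks, Set.mem_iUnion.mpr ⟨hk, h⟩, rfl⟩
          · simp [dif_neg hk] at h
      refine Set.Finite.subset ?_ hsub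
      refine Set.Finite.biUnion s.finite_toSet fun k hk => ?_
      refine Set.Finite.image _ ?_
      refine Set.Finite.subset ((f k hk).finite_look) ?_
      intro p hp
      simp only [Set.mem_iUnion] at hp
      obtain ⟨h, hp⟩ := hp
      exact hp

theorem DtryNE.look_prefixFree : ∀ t : DtryNE a, PrefixFreeKeys t.look
  | .pure x => by
      rintro (_ | ⟨k, ks⟩) (_ | ⟨k', ks'⟩) h h' hne hpre <;>
        simp_all [DtryNE.look]
  | .join s hs f => by
      rintro (_ | ⟨k, ks⟩) (_ | ⟨k', ks'⟩) h h' hne hpre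
      · exact hne rfl
      · simp [DtryNE.look] at h
      · simp [List.prefix_iff_eq_take] at hpre  -- cons not prefix of nil
      · obtain ⟨hkk, hpre'⟩ := List.cons_prefix_cons.mp hpre
        subst hkk
        simp only [DtryNE.look, Set.mem_setOf_eq] at h h'
        by_cases hk : k ∈ s
        · simp only [dif_pos hk] at h h'
          exact (f k hk).look_prefixFree ks ks' h h' (by simpa using hne) hpre'
        · simp [dif_neg hk] at h

theorem DtryNE.look_inj : ∀ t t' : DtryNE a, t.look = t'.look → t = t'
  | .pure x, .pure y, h => by
      have := congrFun h []
      simp [DtryNE.look] at this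
      rw [this]
  | .pure x, .join s hs f, h => by
      have := congrFun h []
      simp [DtryNE.look] at this
  | .join s hs f, .pure y, h => by
      have := congrFun h []
      simp [DtryNE.look] at this
  | .join s hs f, .join s' hs' f', h => by
      have hss : s = s' := by
        ext k
        constructor <;> intro hk
        · by_contra hk'
          obtain ⟨p, hp⟩ := (f k hk).exists_look_ne
          have := congrFun h (k :: p)
          simp only [DtryNE.look, dif_pos hk, dif_neg hk'] at this
          exact hp this
        · by_contra hk'
          obtain ⟨p, hp⟩ := (f' k hk).exists_look_ne
          have := congrFun h (k :: p)
          simp only [DtryNE.look, dif_pos hk, dif_neg hk'] at this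
          exact hp this.symm
      subst hss
      have hf : f = f' := by
        funext k hk
        refine DtryNE.look_inj _ _ (funext fun p => ?_)
        have := congrFun h (k :: p)
        simpa only [DtryNE.look, dif_pos hk] using this
      rw [hf]

theorem Dtry.pathMap_inj : ∀ d d' : Dtry a, d.pathMap = d'.pathMap → d = d'
  | none, none, _ => rfl
  | none, some t, h => by
      obtain ⟨p, hp⟩ := t.exists_look_ne
      exact absurd (congrFun h p).symm hp
  | some t, none, h => by
      obtain ⟨p, hp⟩ := t.exists_look_ne
      exact absurd (congrFun h p) hp
  | some t, some t', h => by
      rw [DtryNE.look_inj t t' h]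

theorem exists_dtry : ∀ (n : ℕ) (m : List String → Option a),
    (setOf fun p => m p ≠ none).Finite → PrefixFreeKeys m →
    (∀ p, m p ≠ none → p.length ≤ n) →
    ∃ d : Dtry a, d.pathMap = m := by
  intro n
  induction n with
  | zero =>
    intro m hf hpf hlen
    cases hm0 : m [] with
    | none =>
      refine ⟨none, funext fun p => ?_⟩
      cases p with
      | nil => exact hm0.symm
      | cons k ks =>
        by_contra h
        have := hlen (k :: ks) fun hc => h (by simp [Dtry.pathMap]; exact hc.symm ▸ rfl)
        simp at this
    | some x =>
      refine ⟨some (.pure x), funext fun p => ?_⟩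
      cases p with
      | nil => simp [Dtry.pathMap, DtryNE.look, hm0]
      | cons k ks =>
        have := hlen (k :: ks)
        simp [Dtry.pathMap, DtryNE.look]
        by_contra h
        have h2 := this fun hc => h (hc.symm ▸ rfl)
        simp at h2
  | succ n ih =>
    intro m hf hpf hlen
    cases hm0 : m [] with
    | some x =>
      refine ⟨some (.pure x), funext fun p => ?_⟩
      cases p with
      | nil => simp [Dtry.pathMap, DtryNE.look, hm0]
      | cons k ks =>
        simp only [Dtry.pathMap, DtryNE.look]
        by_contra h
        have hne : m (k :: ks) ≠ none := fun hc => h hc.symm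
        exact hpf [] (k :: ks) (by simp [hm0]) hne (by simp) (by simp)
    | none =>
      by_cases hs0 : ∀ p, m p = none
      · exact ⟨none, funext fun p => (hs0 p).symm⟩
      · push_neg at hs0
        classical
        let s : Finset String := hf.toFinset.image List.headI
        have hmem_s : ∀ k, k ∈ s ↔ ∃ p, m (k :: p) ≠ none := by
          intro k
          constructor
          · intro hk
            simp only [s, Finset.mem_image, Set.Finite.mem_toFinset, Set.mem_setOf_eq] at hk
            obtain ⟨q, hq, hqk⟩ := hk
            cases q with
            | nil => exact absurd hm0 hq
            | cons q0 qs => exact ⟨qs, by simpa using hqk ▸ hq⟩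
          · rintro ⟨p, hp⟩
            simp only [s, Finset.mem_image, Set.Finite.mem_toFinset, Set.mem_setOf_eq]
            exact ⟨k :: p, hp, rfl⟩
        have hs : s.Nonempty := by
          obtain ⟨p, hp⟩ := hs0
          cases p with
          | nil => exact absurd hm0 hp
          | cons k ks => exact ⟨k, (hmem_s k).mpr ⟨ks, hp⟩⟩
        have key : ∀ k, k ∈ s → ∃ t : DtryNE a, ∀ p, t.look p = m (k :: p) := by
          intro k hk
          have hfin : (setOf fun p => m (k :: p) ≠ none).Finite := by
            have : (setOf fun p => m (k :: p) ≠ none) =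
                (fun p => k :: p) ⁻¹' (setOf fun p => m p ≠ none) := rfl
            rw [this]
            exact Set.Finite.preimage (Set.injOn_of_injective
              (fun p q h => by injection h)) hf
          have hpf' : PrefixFreeKeys fun p => m (k :: p) := by
            intro p p' h h' hne hpre
            exact hpf (k :: p) (k :: p') h h' (by simpa using hne)
              (List.cons_prefix_cons.mpr ⟨rfl, hpre⟩)
          have hlen' : ∀ p, m (k :: p) ≠ none → p.length ≤ n := by
            intro p hp
            have := hlen (k :: p) hp
            simpa using this
          obtain ⟨d, hd⟩ := ih (fun p => m (k :: p)) hfin hpf' hlen'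
          cases d with
          | none =>
            obtain ⟨p, hp⟩ := (hmem_s k).mp hk
            exact absurd (congrFun hd p).symm hp
          | some t => exact ⟨t, fun p => congrFun hd p⟩
        choose t ht using key
        refine ⟨some (.join s hs t), funext fun p => ?_⟩
        cases p with
        | nil => simp [Dtry.pathMap, DtryNE.look, hm0]
        | cons k ks =>
          simp only [Dtry.pathMap, DtryNE.look]
          by_cases hk : k ∈ s
          · rw [dif_pos hk, ht k hk]
          · rw [dif_neg hk]
            by_contra h
            have hne : m (k :: ks) ≠ none := fun hc => h hc.symm
            exact hk ((hmem_s k).mpr ⟨ks, hne⟩)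


/-- a finitely supported map `m` from lists of strings to values of type `a`
lies in the image of `pathMap` if and only if its key set is prefix-free; consequently
`pathMap` is a bijection onto the finitely supported maps with prefix-free key sets
(the inverse being `fromPathMap`, given by successive insertion). -/
theorem pathMap_image_prefixFree {a : Type} :
    (∀ d : Dtry a,
      (setOf fun p => d.pathMap p ≠ none).Finite ∧ PrefixFreeKeys d.pathMap) ∧
    (∀ m : List String → Option a,
      (setOf fun p => m p ≠ none).Finite → PrefixFreeKeys m →
        ∃! d : Dtry a, d.pathMap = m) := by
  constructor
  · intro d
    cases d with
    | none =>
      constructor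
      · convert Set.finite_empty using 1
        ext p
        simp [Dtry.pathMap, setOf]
      · intro p p' h h'
        exact absurd rfl h
    | some t => exact ⟨t.finite_look, t.look_prefixFree⟩
  · intro m hf hpf
    classical
    have hlen : ∀ p, m p ≠ none → p.length ≤ hf.toFinset.sup List.length := by
      intro p hp
      exact Finset.le_sup (hf.mem_toFinset.mpr hp)
    obtain ⟨d, hd⟩ := exists_dtry _ m hf hpf hlen
    exact ⟨d, hd, fun d' hd' => Dtry.pathMap_inj d' d (hd'.trans hd.symm)⟩
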